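/- Let S be a set and F a map from length-two words over S to length-two words over S such that F is idempotent (F ∘ F = F) and F_{212} = F_{2121} = F_{1212} as maps on words of length 3 (where F_i applies F at positions i, i+1 and F_{i_1|…|i_n} := F_{i_n} ∘ ⋯ ∘ F_{i_1}). Then there exists a quadratic normalisation (S, N) of class (4, 3) whose restriction N̄ to length-two words equals F. -/

import Mathlib

/-- A normalisation `(S, N)`: a length-preserving map `N : S* → S*` fixing the letters
and compatible with itself on factors. -/
structure Normalisation (S : Type*) where
  /-- The normalisation map. -/
  N : List S → List S
  length_eq : ∀ w : List S, (N w).length = w.length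
  single : ∀ s : S, N [s] = [s]
  compat : ∀ u w v : List S, N (u ++ N w ++ v) = N (u ++ w ++ v)

/-- The restriction `N̄` of `N` to length-two words, as a map on pairs. -/
def Normalisation.pair {S : Type*} (Q : Normalisation S) (p : S × S) : S × S :=
  match Q.N [p.1, p.2] with
  | [a, b] => (a, b)
  | _ => p

/-- Apply `F` to the entries at (1-based) positions `i, i+1` of a word. -/
def applyAt {α : Type*} (F : α × α → α × α) : ℕ → List α → List α
  | 1, a :: b :: t => (F (a, b)).1 :: (F (a, b)).2 :: t
  | n + 2, a :: t => a :: applyAt F (n + 1) t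
  | _, l => l

/-- Apply `F` successively at the positions listed in `u` (leftmost entry first):
`F_u = F_{i_n} ∘ ⋯ ∘ F_{i_1}` for `u = i_1|…|i_n`. -/
def applySeq {α : Type*} (F : α × α → α × α) (u : List ℕ) (w : List α) : List α :=
  u.foldl (fun v i => applyAt F i v) w

/-- `altSeq s m` is the alternating sequence of `1`s and `2`s of length `m` starting
with `s`: `altSeq 1 m = 121⋯[m]` and `altSeq 2 m = 212⋯[m]`. -/
def altSeq : ℕ → ℕ → List ℕ
  | _, 0 => []
  | s, m + 1 => s :: altSeq (3 - s) m

/-- A normalisation is quadratic if (i) a word is `N`-normal iff all its length-two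
factors are, and (ii) `N(w)` is always obtained by applying `N̄` at finitely many
positions. -/
def Normalisation.Quadratic {S : Type*} (Q : Normalisation S) : Prop :=
  (∀ w : List S, Q.N w = w ↔
    ∀ u v : List S, ∀ a b : S, w = u ++ [a, b] ++ v → Q.N [a, b] = [a, b]) ∧
  (∀ w : List S, ∃ u : List ℕ, Q.N w = applySeq Q.pair u w)

/-- `(S, N)` is of left class `c`: `N(w) = N̄_{121⋯[c]}(w)` for every length-3 word. -/
def Normalisation.LeftClass {S : Type*} (Q : Normalisation S) (c : ℕ) : Prop :=
  ∀ w : List S, w.length = 3 → Q.N w = applySeq Q.pair (altSeq 1 c) w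

/-- `(S, N)` is of right class `c`: `N(w) = N̄_{212⋯[c]}(w)` for every length-3 word. -/
def Normalisation.RightClass {S : Type*} (Q : Normalisation S) (c : ℕ) : Prop :=
  ∀ w : List S, w.length = 3 → Q.N w = applySeq Q.pair (altSeq 2 c) w

namespace QN43

variable {S : Type*}

def push (F : S × S → S × S) : S → List S → List S
  | a, [] => [a]
  | a, b :: t => (F (a, b)).1 :: push F (F (a, b)).2 t

def nmap (F : S × S → S × S) : List S → List S
  | [] => []
  | a :: w => push F a (nmap F w)

def Norm2 (F : S × S → S × S) : List S → Prop
  | a :: b :: t => F (a, b) = (a, b) ∧ Norm2 F (b :: t)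
  | _ => True

/-- The hypotheses of the theorem, bundled. -/
def Hyp (F : S × S → S × S) : Prop :=
  F ∘ F = F ∧ ∀ w : List S, w.length = 3 →
      applySeq F (altSeq 2 3) w = applySeq F (altSeq 2 4) w ∧
      applySeq F (altSeq 2 4) w = applySeq F (altSeq 1 4) w

variable {F : S × S → S × S}

@[simp] lemma push_nil (a : S) : push F a [] = [a] := rfl
@[simp] lemma push_cons (a b : S) (t : List S) :
    push F a (b :: t) = (F (a, b)).1 :: push F (F (a, b)).2 t := rfl
@[simp] lemma nmap_nil : nmap F ([] : List S) = [] := rfl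
@[simp] lemma nmap_cons (a : S) (w : List S) : nmap F (a :: w) = push F a (nmap F w) := rfl

@[simp] lemma applyAt_one (a b : S) (t : List S) :
    applyAt F 1 (a :: b :: t) = (F (a, b)).1 :: (F (a, b)).2 :: t := rfl

@[simp] lemma applyAt_succ_succ (n : ℕ) (a : S) (t : List S) :
    applyAt F (n + 2) (a :: t) = a :: applyAt F (n + 1) t := rfl

@[simp] lemma applySeq_nil (w : List S) : applySeq F [] w = w := rfl
@[simp] lemma applySeq_cons (i : ℕ) (u : List ℕ) (w : List S) :
    applySeq F (i :: u) w = applySeq F u (applyAt F i w) := rfl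

lemma applySeq_append (u v : List ℕ) (w : List S) :
    applySeq F (u ++ v) w = applySeq F v (applySeq F u w) :=
  List.foldl_append

lemma push_length (a : S) : ∀ v : List S, (push F a v).length = v.length + 1 := by
  intro v
  induction v generalizing a with
  | nil => rfl
  | cons b t ih => simp [ih]

lemma nmap_length : ∀ w : List S, (nmap F w).length = w.length := by
  intro w
  induction w with
  | nil => rfl
  | cons a w ih => simp [push_length, ih]

lemma idem (h : Hyp F) (p : S × S) : F (F p) = F p := congrFun h.1 p

lemma domino (h : Hyp F) {b c : S} (hbc : F (b, c) = (b, c)) (a : S) :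
    F ((F (a, b)).1, (F ((F (a, b)).2, c)).1) =
      ((F (a, b)).1, (F ((F (a, b)).2, c)).1) := by
  have h' := (h.2 [a, b, c] rfl).1
  simp only [altSeq] at h'
  simp only [show (3:ℕ) - 2 = 1 from rfl, show (3:ℕ) - 1 = 2 from rfl] at h'
  simp [hbc] at h'
  exact Prod.ext h'.1.symm h'.2.symm

lemma triple (h : Hyp F) (a b c : S) :
    [(F (a, (F (b, c)).1)).1,
     (F ((F (a, (F (b, c)).1)).2, (F (b, c)).2)).1,
     (F ((F (a, (F (b, c)).1)).2, (F (b, c)).2)).2] =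
    [(F ((F (a, b)).1, (F ((F (a, b)).2, c)).1)).1,
     (F ((F ((F (a, b)).1, (F ((F (a, b)).2, c)).1)).2, (F ((F (a, b)).2, c)).2)).1,
     (F ((F ((F (a, b)).1, (F ((F (a, b)).2, c)).1)).2, (F ((F (a, b)).2, c)).2)).2] := by
  have h' := ((h.2 [a, b, c] rfl).1.trans (h.2 [a, b, c] rfl).2)
  simp only [altSeq] at h'
  simp only [show (3:ℕ) - 2 = 1 from rfl, show (3:ℕ) - 1 = 2 from rfl] at h'
  simpa using h'

lemma push_push (h : Hyp F) : ∀ (u : List S) (a b : S),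
    push F a (push F b u) = push F (F (a, b)).1 (push F (F (a, b)).2 u) := by
  intro u
  induction u with
  | nil =>
    intro a b
    have h1 := idem h (a, b)
    simp only [push_nil, push_cons, Prod.mk.eta, h1]
  | cons c t ih =>
    intro a b
    simp only [push_cons]
    conv_lhs => rw [ih]
    conv_rhs => rw [ih]
    have h3 := triple h a b c
    simp only [List.cons.injEq, and_true] at h3
    rw [h3.1, h3.2.1, h3.2.2]

lemma foldr_push_push (h : Hyp F) : ∀ (v : List S) (a : S) (z : List S),
    List.foldr (push F) z (push F a v) = List.foldr (push F) z (a :: v) := by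
  intro v
  induction v with
  | nil => intro a z; rfl
  | cons b t ih =>
    intro a z
    simp only [push_cons, List.foldr_cons]
    rw [ih, List.foldr_cons, ← push_push h]

lemma foldr_nmap (h : Hyp F) : ∀ (w z : List S),
    List.foldr (push F) z (nmap F w) = List.foldr (push F) z w := by
  intro w
  induction w with
  | nil => intro z; rfl
  | cons a w ih =>
    intro z
    rw [nmap_cons, foldr_push_push h, List.foldr_cons, List.foldr_cons, ih]

lemma nmap_append (x y : List S) :
    nmap F (x ++ y) = List.foldr (push F) (nmap F y) x := by
  induction x with
  | nil => rfl
  | cons a x ih => simp [ih]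

lemma compat (h : Hyp F) (u w v : List S) :
    nmap F (u ++ nmap F w ++ v) = nmap F (u ++ w ++ v) := by
  rw [List.append_assoc, List.append_assoc, nmap_append, nmap_append,
    nmap_append, nmap_append, foldr_nmap h]


@[simp] lemma norm2_nil : Norm2 F ([] : List S) := trivial
@[simp] lemma norm2_single (a : S) : Norm2 F [a] := trivial
lemma norm2_cons_cons {a b : S} {t : List S} :
    Norm2 F (a :: b :: t) ↔ F (a, b) = (a, b) ∧ Norm2 F (b :: t) := Iff.rfl

lemma norm2_push (h : Hyp F) : ∀ (v : List S) (a : S), Norm2 F v → Norm2 F (push F a v) := by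
  intro v
  induction v with
  | nil => intro a _; simp
  | cons b t ih =>
    intro a hv
    cases t with
    | nil =>
      simp only [push_cons, push_nil]
      exact ⟨by rw [Prod.mk.eta, idem h], trivial⟩
    | cons c t' =>
      obtain ⟨hbc, hct⟩ := hv
      simp only [push_cons]
      exact ⟨domino h hbc a, ih (F (a, b)).2 hct⟩

lemma norm2_nmap (h : Hyp F) : ∀ w : List S, Norm2 F (nmap F w) := by
  intro w
  induction w with
  | nil => simp
  | cons a w ih => exact norm2_push h _ a ih

lemma push_of_norm2 : ∀ (v : List S) (a : S), Norm2 F (a :: v) → push F a v = a :: v := by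
  intro v
  induction v with
  | nil => intro a _; rfl
  | cons b t ih =>
    intro a hv
    obtain ⟨hab, hbt⟩ := hv
    simp only [push_cons, hab]
    rw [ih b hbt]

lemma norm2_tail {a : S} {w : List S} (hv : Norm2 F (a :: w)) : Norm2 F w := by
  cases w with
  | nil => trivial
  | cons b t => exact hv.2

lemma nmap_of_norm2 : ∀ w : List S, Norm2 F w → nmap F w = w := by
  intro w
  induction w with
  | nil => intro _; rfl
  | cons a w ih =>
    intro hv
    rw [nmap_cons, ih (norm2_tail hv), push_of_norm2 w a hv]

lemma nmap_eq_self_iff (h : Hyp F) (w : List S) : nmap F w = w ↔ Norm2 F w :=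
  ⟨fun hw => hw ▸ norm2_nmap h w, nmap_of_norm2 w⟩

lemma norm2_iff_factors : ∀ w : List S,
    Norm2 F w ↔ ∀ u v : List S, ∀ a b : S, w = u ++ [a, b] ++ v → F (a, b) = (a, b) := by
  intro w
  induction w with
  | nil =>
    simp only [norm2_nil, true_iff]
    intro u v a b hw
    simp at hw
  | cons x w ih =>
    cases w with
    | nil =>
      simp only [norm2_single, true_iff]
      intro u v a b hw
      have := congrArg List.length hw
      simp at this
      omega
    | cons y t =>
      rw [norm2_cons_cons]
      constructor
      · rintro ⟨h1, h2⟩ u v a b hw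
        cases u with
        | nil =>
          simp only [List.nil_append, List.cons_append, List.cons.injEq] at hw
          obtain ⟨rfl, rfl, _⟩ := hw
          exact h1
        | cons z u' =>
          simp only [List.cons_append, List.cons.injEq] at hw
          exact (ih.1 h2) u' v a b hw.2
      · intro hf
        refine ⟨hf [] t x y rfl, ih.2 ?_⟩
        intro u v a b hw
        exact hf (x :: u) v a b (by rw [hw]; rfl)

lemma applyAt_shift {i : ℕ} (hi : 1 ≤ i) (a : S) (t : List S) :
    applyAt F (i + 1) (a :: t) = a :: applyAt F i t := by
  cases i with
  | zero => omega
  | succ n => exact applyAt_succ_succ n a t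

lemma applySeq_shift : ∀ (u : List ℕ), (∀ i ∈ u, 1 ≤ i) → ∀ (a : S) (w : List S),
    applySeq F (u.map (· + 1)) (a :: w) = a :: applySeq F u w := by
  intro u
  induction u with
  | nil => intro _ a w; rfl
  | cons i us ih =>
    intro hu a w
    simp only [List.map_cons, applySeq_cons]
    rw [applyAt_shift (hu i (by simp)), ih (fun j hj => hu j (by simp [hj]))]

lemma push_applySeq : ∀ (v : List S) (a : S), ∃ u : List ℕ,
    (∀ i ∈ u, 1 ≤ i) ∧ push F a v = applySeq F u (a :: v) := by
  intro v
  induction v with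
  | nil => intro a; exact ⟨[], by simp⟩
  | cons b t ih =>
    intro a
    obtain ⟨u, hu, hpu⟩ := ih (F (a, b)).2
    refine ⟨1 :: u.map (· + 1), ?_, ?_⟩
    · intro i hi
      simp only [List.mem_cons, List.mem_map] at hi
      rcases hi with rfl | ⟨j, _, rfl⟩ <;> omega
    · simp only [push_cons, applySeq_cons, applyAt_one]
      rw [applySeq_shift u hu, ← hpu]

lemma nmap_applySeq (w : List S) : ∃ u : List ℕ,
    (∀ i ∈ u, 1 ≤ i) ∧ nmap F w = applySeq F u w := by
  induction w with
  | nil => exact ⟨[], by simp⟩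
  | cons a w ih =>
    obtain ⟨u, hu, hw⟩ := ih
    obtain ⟨u2, hu2, hp⟩ := push_applySeq (nmap F w) a
    refine ⟨u.map (· + 1) ++ u2, ?_, ?_⟩
    · intro i hi
      simp only [List.mem_append, List.mem_map] at hi
      rcases hi with ⟨j, _, rfl⟩ | hi
      · omega
      · exact hu2 i hi
    · rw [nmap_cons, hp, applySeq_append, applySeq_shift u hu, ← hw]


lemma nmap_three (a b c : S) : nmap F [a, b, c] = applySeq F (altSeq 2 3) [a, b, c] := by
  simp [altSeq]

end QN43

namespace QN43
variable {S : Type*} {F : S × S → S × S}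

/-- The normalisation built from `F` by iterated pushing. -/
def QQ (F : S × S → S × S) (h : Hyp F) : Normalisation S :=
  ⟨nmap F, nmap_length, fun _ => rfl, compat h⟩

lemma QQ_N (h : Hyp F) : (QQ F h).N = nmap F := rfl

lemma QQ_pair (h : Hyp F) : (QQ F h).pair = F := by
  funext p
  show ((F (p.1, p.2)).1, (F (p.1, p.2)).2) = F p
  simp

end QN43

/-- If `F` is an idempotent map on length-two words over `S` satisfying
`F_{212} = F_{2121} = F_{1212}` on length-3 words, then there exists a quadratic
normalisation `(S, N)` of class `(4, 3)` whose restriction to length-two words is `F`. -/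
theorem exists_quadratic_class43_of_idempotent {S : Type*} (F : S × S → S × S)
    (hidem : F ∘ F = F)
    (hrel : ∀ w : List S, w.length = 3 →
      applySeq F (altSeq 2 3) w = applySeq F (altSeq 2 4) w ∧
      applySeq F (altSeq 2 4) w = applySeq F (altSeq 1 4) w) :
    ∃ Q : Normalisation S, Q.Quadratic ∧ Q.LeftClass 4 ∧ Q.RightClass 3 ∧
      ∀ a b : S, Q.N [a, b] = [(F (a, b)).1, (F (a, b)).2] := by
  have h : QN43.Hyp F := ⟨hidem, hrel⟩
  refine ⟨QN43.QQ F h, ⟨?_, ?_⟩, ?_, ?_, fun a b => rfl⟩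
  · -- condition (i)
    intro w
    rw [QN43.QQ_N h]
    refine (QN43.nmap_eq_self_iff h w).trans ((QN43.norm2_iff_factors w).trans ?_)
    constructor
    · intro hf u v a b hw
      rw [show QN43.nmap F [a, b] = [(F (a, b)).1, (F (a, b)).2] from rfl, hf u v a b hw]
    · intro hf u v a b hw
      have h2 := hf u v a b hw
      rw [show QN43.nmap F [a, b] = [(F (a, b)).1, (F (a, b)).2] from rfl] at h2
      simp only [List.cons.injEq, and_true] at h2
      exact Prod.ext h2.1 h2.2
  · -- condition (ii)
    intro w
    obtain ⟨u, _, hw⟩ := QN43.nmap_applySeq (F := F) w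
    exact ⟨u, by rw [QN43.QQ_N h, QN43.QQ_pair h, hw]⟩
  · -- left class 4
    intro w hw3
    obtain ⟨a, b, c, rfl⟩ := List.length_eq_three.1 hw3
    rw [QN43.QQ_N h, QN43.QQ_pair h, QN43.nmap_three,
      (hrel [a, b, c] rfl).1, (hrel [a, b, c] rfl).2]
  · -- right class 3
    intro w hw3
    obtain ⟨a, b, c, rfl⟩ := List.length_eq_three.1 hw3
    rw [QN43.QQ_N h, QN43.QQ_pair h, QN43.nmap_three]
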